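/- Let H be an infinite-dimensional separable complex Hilbert space and let M = B(H) be the von Neumann algebra of all bounded operators on H (a type I_∞ factor). Then every Powers shift ρ ∈ End(M), i.e. every unital injective *-endomorphism ρ of B(H) with ⋂_{n≥0} ρ^n(B(H)) = ℂ·1, has the generating property M_ρ = M. -/

import Mathlib

noncomputable section

variable {H : Type*} [NormedAddCommGroup H] [InnerProductSpace ℂ H] [CompleteSpace H]

/-- The relative commutant `f^n(B(H))' ∩ B(H)` of the range of the `n`-th iterate of `f`. -/
def relCommUniv (f : (H →L[ℂ] H) → (H →L[ℂ] H)) (n : ℕ) : Set (H →L[ℂ] H) :=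
  Set.centralizer (f^[n] '' (Set.univ : Set (H →L[ℂ] H)))

/-- `M_f` for `M = B(H)`: the von Neumann subalgebra of `B(H)` generated by
`⋃ n, f^n(B(H))' ∩ B(H)`, realized as the double commutant. -/
def genVNUniv (f : (H →L[ℂ] H) → (H →L[ℂ] H)) : Set (H →L[ℂ] H) :=
  Set.centralizer (Set.centralizer (⋃ n, relCommUniv f n))

open ContinuousLinearMap Submodule Set

local notation "⟪" x ", " y "⟫" => @inner ℂ _ _ x y

/-- rank one operator |x⟩⟨y| -/
def rk (x y : H) : H →L[ℂ] H := (innerSL ℂ y).smulRight x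

@[simp] lemma rk_apply (x y v : H) : rk x y v = ⟪y, v⟫ • x := rfl

lemma comp_rk (T : H →L[ℂ] H) (x y : H) : T ∘L rk x y = rk (T x) y := by
  ext v; simp [rk_apply]

lemma rk_comp_rk (x y z w : H) : rk x y ∘L rk z w = ⟪y, z⟫ • rk x w := by
  ext v; simp [rk_apply, smul_smul, mul_comm]

lemma adjoint_rk (x y : H) : ContinuousLinearMap.adjoint (rk x y) = rk y x := by
  symm
  rw [eq_adjoint_iff]
  intro v w
  simp [rk_apply, inner_smul_left, inner_smul_right, mul_comm]

lemma star_rk (x y : H) : star (rk x y) = rk y x := by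
  rw [star_eq_adjoint, adjoint_rk]

/-- two continuous linear maps agreeing on a hilbert basis agree -/
lemma ext_hilbertBasis {ι : Type*} (b : HilbertBasis ι ℂ H) {f g : H →L[ℂ] H}
    (h : ∀ i, f (b i) = g (b i)) : f = g := by
  have hd : Dense ((span ℂ (Set.range ⇑b) : Submodule ℂ H) : Set H) := by
    rw [Submodule.dense_iff_topologicalClosure_eq_top]
    exact b.dense_span
  have heq : Set.EqOn ⇑f ⇑g (span ℂ (Set.range ⇑b) : Set H) := by
    intro x hx
    induction hx using Submodule.span_induction with
    | mem x hx => obtain ⟨i, rfl⟩ := hx; exact h i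
    | zero => simp
    | add x y _ _ hx hy => simp [map_add, hx, hy]
    | smul c x _ hx => simp [map_smul, hx]
  have := Continuous.ext_on hd f.continuous g.continuous heq
  ext v
  exact congrFun this v

/-- an orthonormal family in a separable space has countable index -/
lemma countable_of_orthonormal {E : Type*} [NormedAddCommGroup E] [InnerProductSpace ℂ E]
    [TopologicalSpace.SeparableSpace E] {ι : Type*} {v : ι → E}
    (hv : Orthonormal ℂ v) : Countable ι := by
  obtain ⟨D, hDc, hDd⟩ := TopologicalSpace.exists_countable_dense E
  have key : ∀ i : ι, ∃ d ∈ D, dist (v i) d < 0.7 := by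
    intro i
    have := (Metric.dense_iff.mp hDd) (v i) 0.7 (by norm_num)
    obtain ⟨y, hy1, hy2⟩ := this
    exact ⟨y, hy2, by simpa [dist_comm] using Metric.mem_ball.mp hy1⟩
  choose d hd hdist using key
  have hsep : ∀ i j : ι, i ≠ j → (1.4 : ℝ) < dist (v i) (v j) := by
    intro i j hij
    have h2 : dist (v i) (v j) ^ 2 = 2 := by
      rw [dist_eq_norm, norm_sub_sq (𝕜 := ℂ)]
      have h1 : ⟪v i, v j⟫ = 0 := hv.2 hij
      simp [h1, hv.1 i, hv.1 j]; norm_num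
    nlinarith [dist_nonneg (x := v i) (y := v j)]
  have hinj : Function.Injective d := by
    intro i j hij
    by_contra hne
    have := hsep i j hne
    have h1 := hdist i
    have h2 := hdist j
    have : dist (v i) (v j) ≤ dist (v i) (d i) + dist (d j) (v j) := by
      rw [hij]; exact dist_triangle _ _ _
    rw [dist_comm (d j)] at this
    linarith
  have : Countable D := hDc.to_subtype
  have hinj2 : Function.Injective (fun i => (⟨d i, hd i⟩ : D)) := by
    intro i j hij
    exact hinj (congrArg Subtype.val hij)
  exact Function.Injective.countable hinj2

/-- a separable infinite-dimensional Hilbert space has a Hilbert basis indexed by ℕ -/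
lemma exists_hilbertBasis_nat (E : Type*) [NormedAddCommGroup E] [InnerProductSpace ℂ E]
    [CompleteSpace E] [TopologicalSpace.SeparableSpace E] (h : ¬ FiniteDimensional ℂ E) :
    Nonempty (HilbertBasis ℕ ℂ E) := by
  obtain ⟨w, b, hb⟩ := exists_hilbertBasis ℂ E
  have hw_on : Orthonormal ℂ ((↑) : w → E) := hb ▸ b.orthonormal
  have hcw : Countable w := countable_of_orthonormal hw_on
  have hiw : Infinite w := by
    rw [Set.infinite_coe_iff.symm.symm]
    by_contra hfin
    rw [Set.not_infinite] at hfin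
    have hfd : FiniteDimensional ℂ (span ℂ (Set.range ((↑) : w → E))) := by
      apply FiniteDimensional.span_of_finite
      rw [Subtype.range_coe]; exact hfin
    have hclosed : IsClosed ((span ℂ (Set.range ((↑) : w → E))) : Set E) :=
      Submodule.closed_of_finiteDimensional _
    have hdense := b.dense_span
    rw [hb] at hdense
    rw [hclosed.submodule_topologicalClosure_eq] at hdense
    have : FiniteDimensional ℂ (⊤ : Submodule ℂ E) := hdense ▸ hfd
    exact h ((Submodule.topEquiv (R := ℂ) (M := E)).finiteDimensional)
  have ⟨hd⟩ := nonempty_denumerable w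
  let e : ℕ ≃ w := (Denumerable.eqv w).symm
  refine ⟨HilbertBasis.mk (v := fun n => ((e n : w) : E)) (hw_on.comp e e.injective) ?_⟩
  have hr : Set.range (fun n => ((e n : w) : E)) = Set.range ((↑) : w → E) := by
    have : (fun n => ((e n : w) : E)) = ((↑) : w → E) ∘ e := rfl
    rw [this, Set.range_comp, e.surjective.range_eq, Set.image_univ]
  rw [hr]
  have hdense := b.dense_span
  rw [hb] at hdense
  rw [hdense]


/-- an almost disjoint family of infinite subsets of ℕ indexed by ℝ -/
lemma exists_almost_disjoint_family :
    ∃ S : ℝ → Set ℕ, (∀ r, (S r).Infinite) ∧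
      (∀ r s : ℝ, r ≠ s → (S r ∩ S s).Finite) := by
  -- for each real r choose rationals q r n ∈ (r + 1/(n+2), r + 1/(n+1))
  have key : ∀ (r : ℝ) (n : ℕ), ∃ q : ℚ,
      r + 1/(n+2) < (q:ℝ) ∧ (q:ℝ) < r + 1/(n+1) := by
    intro r n
    apply exists_rat_btwn
    have h1 : (1:ℝ)/(n+2) < 1/(n+1) := by
      apply one_div_lt_one_div_of_lt
      · positivity
      · push_cast; linarith
    linarith [h1]
  choose q hq1 hq2 using key
  -- bounds
  have habs : ∀ (r : ℝ) (n : ℕ), |(q r n : ℝ) - r| < 1/(n+1) := by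
    intro r n
    rw [abs_lt]
    constructor
    · have := hq1 r n; have h2 : (0:ℝ) < 1/(n+2) := by positivity
      have h3 : (0:ℝ) < 1/(n+1) := by positivity
      nlinarith
    · linarith [hq2 r n]
  have hinjaux : ∀ (r : ℝ) (n m : ℕ), n < m → q r n ≠ q r m := by
    intro r n m h hnm
    have h1 := hq2 r m
    have h2 := hq1 r n
    rw [hnm] at h2
    have hcast : (n:ℝ) + 1 ≤ (m:ℝ) := by exact_mod_cast h
    have hle : (1:ℝ)/(m+1) ≤ 1/(n+2) := by
      apply one_div_le_one_div_of_le
      · positivity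
      · linarith
    linarith
  have hinj : ∀ r, Function.Injective (q r) := by
    intro r n m hnm
    by_contra hne
    rcases Nat.lt_or_ge n m with h | h
    · exact hinjaux r n m h hnm
    · have : m < n := by omega
      exact hinjaux r m n this hnm.symm
  -- encode into ℕ
  let e : ℚ ≃ ℕ := (Denumerable.eqv ℚ)
  refine ⟨fun r => e '' (Set.range (q r)), ?_, ?_⟩
  · intro r
    apply Set.Infinite.image (Set.injOn_of_injective e.injective)
    exact Set.infinite_range_of_injective (hinj r)
  · intro r s hrs
    rw [← Set.image_inter e.injective]
    apply Set.Finite.image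
    -- range q r ∩ range q s is finite
    set ε := |r - s| / 3 with hε
    have hεpos : 0 < ε := by
      rw [hε]; have := abs_pos.mpr (sub_ne_zero.mpr hrs); linarith
    obtain ⟨N, hN⟩ := exists_nat_one_div_lt hεpos
    have hsub : Set.range (q r) ∩ Set.range (q s) ⊆
        (q r '' {n | n ≤ N}) ∪ (q s '' {n | n ≤ N}) := by
      rintro x ⟨⟨n, rfl⟩, ⟨m, hm⟩⟩
      by_cases hn : n ≤ N
      · exact Or.inl ⟨n, hn, rfl⟩
      by_cases hm' : m ≤ N
      · exact Or.inr ⟨m, hm', hm⟩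
      exfalso
      push_neg at hn hm'
      have hb1 : |(q r n : ℝ) - r| < ε := by
        have := habs r n
        have hcast : (N:ℝ) + 1 ≤ (n:ℝ) := by exact_mod_cast hn
        have hle : (1:ℝ)/(n+1) ≤ 1/(N+1) := by
          apply one_div_le_one_div_of_le
          · positivity
          · linarith
        linarith
      have hb2 : |(q s m : ℝ) - s| < ε := by
        have := habs s m
        have hcast : (N:ℝ) + 1 ≤ (m:ℝ) := by exact_mod_cast hm'
        have hle : (1:ℝ)/(m+1) ≤ 1/(N+1) := by
          apply one_div_le_one_div_of_le
          · positivity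
          · linarith
        linarith
      rw [hm] at hb2
      have htri : |r - s| ≤ |(q r n : ℝ) - r| + |(q r n : ℝ) - s| := by
        have : r - s = -(((q r n : ℝ) - r)) + ((q r n : ℝ) - s) := by ring
        rw [this]
        refine le_trans (abs_add_le _ _) ?_
        rw [abs_neg]
      have : |r - s| < 2 * ε := by linarith
      rw [hε] at this
      linarith
    exact Set.Finite.subset (Set.Finite.union
      ((Set.finite_le_nat N).image _) ((Set.finite_le_nat N).image _)) hsub
/-- isometry of H onto a closed infinite-dimensional subspace -/
lemma exists_isometry_into {K : Submodule ℂ H} [TopologicalSpace.SeparableSpace H]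
    (hinf : ¬ FiniteDimensional ℂ H)
    (hK : IsClosed (K : Set H)) (hKinf : ¬ FiniteDimensional ℂ K) :
    ∃ u : H →L[ℂ] H, (ContinuousLinearMap.adjoint u ∘L u = 1) ∧ ∀ v, u v ∈ K := by
  haveI : CompleteSpace K := hK.completeSpace_coe
  haveI : SecondCountableTopology H :=
    UniformSpace.secondCountable_of_separable H
  haveI : TopologicalSpace.SeparableSpace K := by infer_instance
  obtain ⟨bH⟩ := exists_hilbertBasis_nat H hinf
  obtain ⟨bK⟩ := exists_hilbertBasis_nat K hKinf
  let e : H ≃ₗᵢ[ℂ] K := bH.repr.trans bK.repr.symm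
  let li : H →ₗᵢ[ℂ] H := K.subtypeₗᵢ.comp e.toLinearIsometry
  refine ⟨li.toContinuousLinearMap, ?_, fun v => (e v).2⟩
  ext v
  apply ext_inner_right ℂ
  intro w
  rw [ContinuousLinearMap.comp_apply, ContinuousLinearMap.adjoint_inner_left]
  have : ∀ a b : H, ⟪li.toContinuousLinearMap a, li.toContinuousLinearMap b⟫ = ⟪a, b⟫ := by
    intro a b
    exact li.inner_map_map a b
  rw [this v w]
  simp
section PS
variable (b : HilbertBasis ℕ ℂ H)

def ES (S : Set ℕ) : Submodule ℂ H := (span ℂ (⇑b '' S)).topologicalClosure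

lemma ES_closed (S : Set ℕ) : IsClosed ((ES b S : Submodule ℂ H) : Set H) :=
  Submodule.isClosed_topologicalClosure _

instance ES_complete (S : Set ℕ) : CompleteSpace (ES b S) :=
  (ES_closed b S).completeSpace_coe

def PS (S : Set ℕ) : H →L[ℂ] H := (ES b S).subtypeL ∘L orthogonalProjection (ES b S)

lemma PS_mem (S : Set ℕ) (v : H) : PS b S v ∈ ES b S := by
  simp [PS]

lemma PS_apply_of_mem (S : Set ℕ) {v : H} (hv : v ∈ ES b S) : PS b S v = v := by
  simp only [PS, ContinuousLinearMap.comp_apply, Submodule.subtypeL_apply]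
  exact (ES b S).starProjection_eq_self_iff.mpr hv

lemma PS_basis_mem (S : Set ℕ) {k : ℕ} (hk : k ∈ S) : PS b S (b k) = b k :=
  PS_apply_of_mem b S (Submodule.le_topologicalClosure _ (Submodule.subset_span ⟨k, hk, rfl⟩))

lemma PS_apply_of_orth (S : Set ℕ) {v : H} (hv : v ∈ (ES b S)ᗮ) : PS b S v = 0 := by
  simp only [PS, ContinuousLinearMap.comp_apply, Submodule.subtypeL_apply]
  rw [Submodule.orthogonalProjectionOnto_apply_of_mem_orthogonal hv]
  rfl

lemma PS_basis_not_mem (S : Set ℕ) {k : ℕ} (hk : k ∉ S) : PS b S (b k) = 0 := by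
  apply PS_apply_of_orth
  have hle : ES b S ≤ (span ℂ {b k})ᗮ := by
    apply Submodule.topologicalClosure_minimal
    · rw [Submodule.span_le]
      rintro x ⟨m, hm, rfl⟩
      intro u hu
      rw [Submodule.mem_span_singleton] at hu
      obtain ⟨a, rfl⟩ := hu
      rw [inner_smul_left]
      have : ⟪b k, b m⟫ = 0 := by
        have := b.orthonormal
        rw [orthonormal_iff_ite] at this
        rw [this]
        simp only [ite_eq_right_iff]
        intro h; exact absurd (h ▸ hm) hk
      simp [this]
    · exact (span ℂ {b k}).isClosed_orthogonal
  intro w hw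
  have := hle hw
  rw [Submodule.mem_orthogonal] at this
  have h2 := this (b k) (Submodule.mem_span_singleton_self _)
  rw [← inner_conj_symm, h2, map_zero]

lemma PS_selfAdjoint (S : Set ℕ) : IsSelfAdjoint (PS b S) :=
  isSelfAdjoint_starProjection _

lemma PS_comp (S T : Set ℕ) : PS b S ∘L PS b T = PS b (S ∩ T) := by
  apply ext_hilbertBasis b
  intro k
  by_cases hT : k ∈ T
  · by_cases hS : k ∈ S
    · simp [PS_basis_mem b T hT, PS_basis_mem b S hS, PS_basis_mem b _ (Set.mem_inter hS hT)]
    · simp [PS_basis_mem b T hT, PS_basis_not_mem b S hS,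
        PS_basis_not_mem b (S ∩ T) (fun h => hS h.1)]
  · simp [PS_basis_not_mem b T hT,
      PS_basis_not_mem b (S ∩ T) (fun h => hT h.2)]

lemma PS_finset (F : Finset ℕ) : PS b (↑F) = ∑ k ∈ F, rk (b k) (b k) := by
  apply ext_hilbertBasis b
  intro m
  rw [ContinuousLinearMap.sum_apply]
  have hb := b.orthonormal
  rw [orthonormal_iff_ite] at hb
  by_cases hm : m ∈ F
  · rw [PS_basis_mem b _ (by exact_mod_cast hm)]
    rw [Finset.sum_eq_single m]
    · simp [rk_apply, hb m m, b.orthonormal.1 m]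
    · intro k hk hkm; simp [rk_apply, hb k m, if_neg hkm]
    · intro h; exact absurd hm h
  · rw [PS_basis_not_mem b _ (by exact_mod_cast hm)]
    symm
    apply Finset.sum_eq_zero
    intro k hk
    have : k ≠ m := fun h => hm (h ▸ hk)
    simp [rk_apply, hb k m, if_neg this]

lemma ES_infinite_dim (S : Set ℕ) (hS : S.Infinite) : ¬ FiniteDimensional ℂ (ES b S) := by
  intro hfd
  have hb := b.orthonormal
  -- the family (fun k : S => ⟨b k, _⟩ : ES b S) is orthonormal and infinite
  have hmem : ∀ k : S, (b k : H) ∈ ES b S := fun ⟨k, hk⟩ =>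
    Submodule.le_topologicalClosure _ (Submodule.subset_span ⟨k, hk, rfl⟩)
  have hon : Orthonormal ℂ (fun k : S => (⟨b (k : ℕ), hmem k⟩ : ES b S)) := by
    rw [orthonormal_iff_ite] at hb ⊢
    intro i j
    rw [Submodule.coe_inner]
    simp only
    rw [hb]
    by_cases h : i = j
    · simp [h]
    · have : (i : ℕ) ≠ (j : ℕ) := fun hc => h (Subtype.ext hc)
      simp [if_neg this, if_neg h]
  have hli := hon.linearIndependent
  have hfin : Finite S := hli.finite
  rw [Set.finite_coe_iff] at hfin
  exact hS hfin

end PS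
lemma rk_add_left (x y w : H) : rk (x + y) w = rk x w + rk y w := by
  ext v; simp [rk_apply, smul_add]

lemma rk_smul_left (c : ℂ) (x w : H) : rk (c • x) w = c • rk x w := by
  ext v; simp [rk_apply, smul_smul, mul_comm]

lemma rk_norm_le (x y : H) : ‖rk x y‖ ≤ ‖y‖ * ‖x‖ := by
  apply ContinuousLinearMap.opNorm_le_bound _ (by positivity)
  intro w
  rw [rk_apply, norm_smul]
  calc ‖⟪y, w⟫‖ * ‖x‖ ≤ (‖y‖ * ‖w‖) * ‖x‖ := by
        apply mul_le_mul_of_nonneg_right (norm_inner_le_norm _ _) (norm_nonneg _)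
    _ = ‖y‖ * ‖x‖ * ‖w‖ := by ring

set_option maxHeartbeats 2000000 in
theorem core [TopologicalSpace.SeparableSpace H] (hinf : ¬ FiniteDimensional ℂ H)
    (σ : (H →L[ℂ] H) →⋆ₐ[ℂ] (H →L[ℂ] H)) (hσinj : Function.Injective ⇑σ) :
    Set.centralizer (Set.centralizer (Set.range ⇑σ)) ⊆ Set.range ⇑σ := by
  intro z hz
  obtain ⟨b⟩ := exists_hilbertBasis_nat H hinf
  have hbnorm : ∀ k, ‖b k‖ = 1 := b.orthonormal.1
  have hb_inner : ∀ k m : ℕ, ⟪b k, b m⟫ = if k = m then 1 else 0 := by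
    have := b.orthonormal; rwa [orthonormal_iff_ite] at this
  have hσnorm : ∀ a, ‖σ a‖ ≤ ‖a‖ := fun a => NonUnitalStarAlgHom.norm_apply_le σ a
  have hσcont : Continuous ⇑σ := AddMonoidHomClass.continuous_of_bound σ 1
    (fun a => by simpa using hσnorm a)
  set p0 : H →L[ℂ] H := rk (b 0) (b 0) with hp0
  have hb00 : ⟪b 0, b 0⟫ = 1 := by rw [hb_inner]; simp
  have hp0sq : p0 * p0 = p0 := by
    rw [ContinuousLinearMap.mul_def, hp0, rk_comp_rk, hb00, one_smul]
  have hp0star : star p0 = p0 := star_rk _ _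
  -- the subspace F = range σ(p0) = ker (1 - σ(p0))
  set Fsub : Submodule ℂ H := LinearMap.ker ((1 - σ p0 : H →L[ℂ] H) : H →ₗ[ℂ] H) with hFdef
  have hFclosed : IsClosed (Fsub : Set H) := by
    exact ContinuousLinearMap.isClosed_ker _
  have hFmem : ∀ v : H, v ∈ Fsub ↔ σ p0 v = v := by
    intro v
    rw [hFdef, LinearMap.mem_ker]
    constructor
    · intro h
      have : v - σ p0 v = 0 := by
        simpa [ContinuousLinearMap.sub_apply] using h
      exact (sub_eq_zero.mp this).symm
    · intro h
      simp [ContinuousLinearMap.sub_apply, h]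
  haveI : CompleteSpace Fsub := hFclosed.completeSpace_coe
  haveI : SecondCountableTopology H := UniformSpace.secondCountable_of_separable H
  obtain ⟨J, η, hη⟩ := exists_hilbertBasis ℂ Fsub
  -- J is nonempty
  have hp0ne : p0 ≠ 0 := by
    intro h
    have h2 : p0 (b 0) = 0 := by rw [h]; rfl
    rw [hp0, rk_apply, hb00, one_smul] at h2
    have := hbnorm 0
    rw [h2, norm_zero] at this
    norm_num at this
  have hσp0ne : σ p0 ≠ 0 := fun h => hp0ne (hσinj (by rw [h, map_zero]))
  obtain ⟨v0, hv0⟩ : ∃ v, σ p0 v ≠ 0 := by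
    by_contra h
    push_neg at h
    exact hσp0ne (ContinuousLinearMap.ext h)
  have hw0 : σ p0 v0 ∈ Fsub := by
    rw [hFmem]
    have h1 : σ p0 (σ p0 v0) = (σ p0 * σ p0) v0 := rfl
    rw [h1, ← map_mul, hp0sq]
  have hJne : Nonempty J := by
    by_contra hJ
    rw [not_nonempty_iff] at hJ
    have hd := η.dense_span
    have hre : Set.range ⇑η = ∅ := Set.range_eq_empty _
    rw [hre, Submodule.span_empty] at hd
    have hbotc : (⊥ : Submodule ℂ Fsub).topologicalClosure = ⊥ := by
      apply le_antisymm
      · apply Submodule.topologicalClosure_minimal ⊥ (le_refl ⊥)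
        rw [Submodule.bot_coe]
        exact isClosed_singleton
      · exact bot_le
    rw [hbotc] at hd
    have hmem : (⟨σ p0 v0, hw0⟩ : Fsub) ∈ (⊤ : Submodule ℂ Fsub) := trivial
    rw [← hd, Submodule.mem_bot] at hmem
    rw [Subtype.ext_iff] at hmem
    exact hv0 hmem
  obtain ⟨j0⟩ := hJne
  -- vectors of the η basis, as elements of H
  set ηv : J → H := fun j => ((η j : Fsub) : H) with hηv
  have hηF : ∀ j, σ p0 (ηv j) = ηv j := fun j => (hFmem _).mp (η j).2
  classical
  have hηinner : ∀ j j' : J, ⟪ηv j, ηv j'⟫ = if j = j' then 1 else 0 := by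
    intro j j'
    have hon := η.orthonormal
    rw [orthonormal_iff_ite] at hon
    have h := hon j j'
    rwa [Submodule.coe_inner] at h
  have hηnorm : ∀ j, ‖ηv j‖ = 1 := by
    intro j
    have h := hηinner j j
    rw [if_pos rfl] at h
    have h2 : ‖ηv j‖ ^ 2 = 1 := by
      rw [← @inner_self_eq_norm_sq ℂ, h]
      simp
    have h3 := norm_nonneg (ηv j)
    nlinarith
  -- the intertwining isometries V j
  set V : J → (H →L[ℂ] H) := fun j => LinearMap.mkContinuous
    { toFun := fun v => σ (rk v (b 0)) (ηv j)
      map_add' := fun v w => by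
        show σ (rk (v + w) (b 0)) (ηv j) = σ (rk v (b 0)) (ηv j) + σ (rk w (b 0)) (ηv j)
        rw [rk_add_left, map_add, ContinuousLinearMap.add_apply]
      map_smul' := fun c v => by
        show σ (rk (c • v) (b 0)) (ηv j) = c • σ (rk v (b 0)) (ηv j)
        rw [rk_smul_left, map_smul, ContinuousLinearMap.smul_apply] }
    1 (fun v => by
      simp only [LinearMap.coe_mk, AddHom.coe_mk]
      calc ‖σ (rk v (b 0)) (ηv j)‖ ≤ ‖σ (rk v (b 0))‖ * ‖ηv j‖ :=
            ContinuousLinearMap.le_opNorm _ _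
        _ ≤ ‖rk v (b 0)‖ * 1 := mul_le_mul (hσnorm _) (le_of_eq (hηnorm j))
            (norm_nonneg _) (norm_nonneg _)
        _ ≤ (‖b 0‖ * ‖v‖) * 1 := by
            have := rk_norm_le v (b 0)
            nlinarith [norm_nonneg v, norm_nonneg (b 0)]
        _ = 1 * ‖v‖ := by rw [hbnorm 0]; ring) with hVdef
  have hVapp : ∀ (j : J) (v : H), V j v = σ (rk v (b 0)) (ηv j) := fun j v => rfl
  -- intertwining relation
  have hIT : ∀ (x : H →L[ℂ] H) (j : J), σ x ∘L V j = V j ∘L x := by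
    intro x j
    ext v
    rw [ContinuousLinearMap.comp_apply, ContinuousLinearMap.comp_apply, hVapp, hVapp]
    have h1 : σ x (σ (rk v (b 0)) (ηv j)) = (σ x * σ (rk v (b 0))) (ηv j) := rfl
    rw [h1, ← map_mul, ContinuousLinearMap.mul_def, comp_rk]
  -- V j preserves inner products
  have hVinner : ∀ (j : J) (v w : H), ⟪V j v, V j w⟫ = ⟪v, w⟫ := by
    intro j v w
    rw [hVapp, hVapp]
    have h1 : ⟪σ (rk v (b 0)) (ηv j), σ (rk w (b 0)) (ηv j)⟫
        = ⟪ηv j, (ContinuousLinearMap.adjoint (σ (rk v (b 0))) ∘L σ (rk w (b 0))) (ηv j)⟫ := by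
      rw [ContinuousLinearMap.comp_apply, ContinuousLinearMap.adjoint_inner_right]
    rw [h1, ← ContinuousLinearMap.star_eq_adjoint, ← map_star, star_rk]
    have h2 : σ (rk (b 0) v) ∘L σ (rk w (b 0)) = σ (rk (b 0) v * rk w (b 0)) := by
      rw [map_mul]; rfl
    rw [h2, ContinuousLinearMap.mul_def, rk_comp_rk, map_smul]
    rw [ContinuousLinearMap.smul_apply, ← hp0, hηF j, inner_smul_right]
    rw [hηinner j j, if_pos rfl, mul_one]
  -- adjoint facts
  have hVadj : ∀ j : J, ContinuousLinearMap.adjoint (V j) ∘L V j = 1 := by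
    intro j
    ext v
    apply ext_inner_right ℂ
    intro w
    rw [ContinuousLinearMap.comp_apply, ContinuousLinearMap.adjoint_inner_left, hVinner]
    rfl
  have hITadj : ∀ (x : H →L[ℂ] H) (j : J),
      ContinuousLinearMap.adjoint (V j) ∘L σ x = x ∘L ContinuousLinearMap.adjoint (V j) := by
    intro x j
    have h := congrArg ContinuousLinearMap.adjoint (hIT (star x) j)
    rw [ContinuousLinearMap.adjoint_comp, ContinuousLinearMap.adjoint_comp] at h
    rw [← ContinuousLinearMap.star_eq_adjoint (σ (star x)), ← map_star, star_star] at h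
    rw [← ContinuousLinearMap.star_eq_adjoint (star x), star_star] at h
    exact h
  -- the subspace W : closed span of the ranges of the V j
  set Wset : Set H := ⋃ j : J, Set.range ⇑(V j) with hWset
  set W : Submodule ℂ H := (span ℂ Wset).topologicalClosure with hW
  have hWclosed : IsClosed (W : Set H) := Submodule.isClosed_topologicalClosure _
  haveI : CompleteSpace W := hWclosed.completeSpace_coe
  have hVrange : ∀ (j : J) (v : H), V j v ∈ W := fun j v =>
    Submodule.le_topologicalClosure _ (Submodule.subset_span
      (Set.mem_iUnion.mpr ⟨j, v, rfl⟩))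
  have hWinv : ∀ (x : H →L[ℂ] H) (w : H), w ∈ W → σ x w ∈ W := by
    intro x w hw
    have hspan : ∀ u ∈ span ℂ Wset, σ x u ∈ W := by
      intro u hu
      induction hu using Submodule.span_induction with
      | mem u hu =>
          rw [hWset, Set.mem_iUnion] at hu
          obtain ⟨j, v, rfl⟩ := hu
          have : σ x (V j v) = (σ x ∘L V j) v := rfl
          rw [this, hIT x j]
          exact hVrange j (x v)
      | zero => rw [map_zero]; exact W.zero_mem
      | add u v _ _ hu hv => rw [map_add]; exact W.add_mem hu hv
      | smul a u _ hu => rw [map_smul]; exact W.smul_mem a hu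
    have hmapsto : Set.MapsTo (⇑(σ x)) ((span ℂ Wset : Submodule ℂ H) : Set H)
        (W : Set H) := hspan
    have hcl := hmapsto.closure (σ x).continuous
    have hwc : w ∈ closure ((span ℂ Wset : Submodule ℂ H) : Set H) := by
      rw [← Submodule.topologicalClosure_coe]
      exact hw
    have hres := hcl hwc
    rwa [hWclosed.closure_eq] at hres
  -- the projections onto W and its complement
  set PW : H →L[ℂ] H := W.subtypeL ∘L orthogonalProjection W with hPW
  set c : H →L[ℂ] H := 1 - PW with hc
  have hPWmem : ∀ w ∈ W, PW w = w := by
    intro w hw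
    rw [hPW]
    simp only [ContinuousLinearMap.comp_apply, Submodule.subtypeL_apply]
    exact W.starProjection_eq_self_iff.mpr hw
  have hPWorth : ∀ v ∈ Wᗮ, PW v = 0 := by
    intro v hv
    rw [hPW]
    simp only [ContinuousLinearMap.comp_apply, Submodule.subtypeL_apply]
    rw [Submodule.orthogonalProjectionOnto_apply_of_mem_orthogonal hv]
    rfl
  have hcapp : ∀ v, c v = v - PW v := by
    intro v
    rw [hc, ContinuousLinearMap.sub_apply, ContinuousLinearMap.one_apply]
  have hcmem : ∀ v, c v ∈ Wᗮ := by
    intro v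
    rw [hcapp]
    have := Submodule.sub_starProjection_mem_orthogonal (K := W) v
    exact this
  have hcW : ∀ w ∈ W, c w = 0 := by
    intro w hw
    rw [hcapp, hPWmem w hw, sub_self]
  have hcWperp : ∀ v ∈ Wᗮ, c v = v := by
    intro v hv
    rw [hcapp, hPWorth v hv, sub_zero]
  have hWperpinv : ∀ (x : H →L[ℂ] H) (ζ : H), ζ ∈ Wᗮ → σ x ζ ∈ Wᗮ := by
    intro x ζ hζ
    rw [Submodule.mem_orthogonal]
    intro u hu
    have h1 : ⟪ContinuousLinearMap.adjoint (σ x) u, ζ⟫ = ⟪u, σ x ζ⟫ :=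
      ContinuousLinearMap.adjoint_inner_left _ _ _
    rw [← h1, ← ContinuousLinearMap.star_eq_adjoint, ← map_star]
    exact (Submodule.mem_orthogonal W ζ).mp hζ _ (hWinv (star x) u hu)
  have hccomm : ∀ x : H →L[ℂ] H, c ∘L σ x = σ x ∘L c := by
    intro x
    ext v
    rw [ContinuousLinearMap.comp_apply, ContinuousLinearMap.comp_apply]
    have hv : σ x v = σ x (PW v) + σ x (c v) := by
      rw [← map_add]
      congr 1
      rw [hcapp]
      abel
    rw [hv, map_add]
    rw [hcW _ (hWinv x _ (by
      rw [hPW]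
      simp only [ContinuousLinearMap.comp_apply, Submodule.subtypeL_apply]
      exact SetLike.coe_mem _))]
    rw [hcWperp _ (hWperpinv x _ (hcmem v)), zero_add]
  -- W is everything
  have hWtop : W = ⊤ := by
    by_contra hWne
    have hWperp : Wᗮ ≠ ⊥ := fun h => hWne (Submodule.orthogonal_eq_bot_iff.mp h)
    obtain ⟨ζ0, hζ0W, hζ0ne⟩ := Submodule.ne_bot_iff _ |>.mp hWperp
    have hcne : c ≠ 0 := by
      intro h
      have h2 := hcWperp ζ0 hζ0W
      rw [h, ContinuousLinearMap.zero_apply] at h2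
      exact hζ0ne h2.symm
    -- σ of rank-ones kill the orthogonal complement of W
    have hketa : ∀ (k : ℕ) (ζ : H), ζ ∈ Wᗮ → σ (rk (b 0) (b k)) ζ = 0 := by
      intro k ζ hζ
      have hmemF : σ (rk (b 0) (b k)) ζ ∈ Fsub := by
        rw [hFmem]
        have h1 : σ p0 (σ (rk (b 0) (b k)) ζ) = (σ p0 * σ (rk (b 0) (b k))) ζ := rfl
        have hp0b0 : p0 (b 0) = b 0 := by rw [hp0, rk_apply, hb00, one_smul]
        rw [h1, ← map_mul, ContinuousLinearMap.mul_def, comp_rk, hp0b0]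
      have horth : ∀ j : J, ⟪ηv j, σ (rk (b 0) (b k)) ζ⟫ = 0 := by
        intro j
        have h1 : ⟪ContinuousLinearMap.adjoint (σ (rk (b 0) (b k))) (ηv j), ζ⟫
            = ⟪ηv j, σ (rk (b 0) (b k)) ζ⟫ :=
          ContinuousLinearMap.adjoint_inner_left _ _ _
        rw [← h1, ← ContinuousLinearMap.star_eq_adjoint, ← map_star, star_rk]
        have h2 : σ (rk (b k) (b 0)) (ηv j) = V j (b k) := (hVapp j (b k)).symm
        rw [h2]
        exact (Submodule.mem_orthogonal W ζ).mp hζ _ (hVrange j (b k))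
      set wF : Fsub := ⟨σ (rk (b 0) (b k)) ζ, hmemF⟩ with hwFdef
      have hrepr0 : ∀ j : J, ⟪η j, wF⟫ = (0 : ℂ) := by
        intro j
        rw [Submodule.coe_inner]
        exact horth j
      have hwF0 : ⟪wF, wF⟫ = (0 : ℂ) := by
        rw [← η.tsum_inner_mul_inner wF wF]
        have : ∀ j : J, ⟪wF, η j⟫ * ⟪η j, wF⟫ = 0 := by
          intro j
          rw [hrepr0 j, mul_zero]
        rw [tsum_congr this, tsum_zero]
      have := inner_self_eq_zero.mp hwF0
      rw [hwFdef] at this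
      exact congrArg Subtype.val this
    -- σ of finite basis projections annihilate c
    have hfin0 : ∀ Fi : Finset ℕ, σ (PS b ↑Fi) ∘L c = 0 := by
      intro Fi
      rw [PS_finset b Fi, map_sum]
      ext v
      rw [ContinuousLinearMap.comp_apply, ContinuousLinearMap.sum_apply,
        ContinuousLinearMap.zero_apply]
      apply Finset.sum_eq_zero
      intro k _
      have hpk : rk (b k) (b k) = rk (b k) (b 0) * rk (b 0) (b k) := by
        rw [ContinuousLinearMap.mul_def, rk_comp_rk, hb00, one_smul]
      rw [hpk, map_mul]
      have h3 : (σ (rk (b k) (b 0)) * σ (rk (b 0) (b k))) (c v)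
          = σ (rk (b k) (b 0)) (σ (rk (b 0) (b k)) (c v)) := rfl
      rw [h3, hketa k (c v) (hcmem v), map_zero]
    -- but σ of infinite basis projections do not annihilate c
    have hinf0 : ∀ S : Set ℕ, S.Infinite → σ (PS b S) ∘L c ≠ 0 := by
      intro S hS h0
      obtain ⟨u, hu1, hu2⟩ := exists_isometry_into (K := ES b S) hinf
        (ES_closed b S) (ES_infinite_dim b S hS)
      have hPu : PS b S ∘L u = u := by
        ext v
        rw [ContinuousLinearMap.comp_apply]
        exact PS_apply_of_mem b S (hu2 v)
      have h1 : (ContinuousLinearMap.adjoint u * (PS b S * u)) = (1 : H →L[ℂ] H) := by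
        rw [ContinuousLinearMap.mul_def, ContinuousLinearMap.mul_def, hPu]
        exact hu1
      have hc0 : c = 0 := by
        ext v
        have h2 : c v = σ (ContinuousLinearMap.adjoint u * (PS b S * u)) (c v) := by
          rw [h1, map_one, ContinuousLinearMap.one_apply]
        rw [map_mul, map_mul] at h2
        have h4 : σ u (c v) = c (σ u v) := by
          have h6 := congrArg (fun T => T v) (hccomm u)
          simpa using h6.symm
        have h5 : (σ (ContinuousLinearMap.adjoint u) * (σ (PS b S) * σ u)) (c v)
            = σ (ContinuousLinearMap.adjoint u) ((σ (PS b S) ∘L c) (σ u v)) := by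
          show σ (ContinuousLinearMap.adjoint u) (σ (PS b S) (σ u (c v))) = _
          rw [h4]; rfl
        rw [h5, h0] at h2
        simpa using h2
      exact hcne hc0
    -- almost disjoint family gives uncountably many orthonormal vectors
    obtain ⟨Sfam, hSinf, hSad⟩ := exists_almost_disjoint_family
    have hvec : ∀ r : ℝ, ∃ v : H, σ (PS b (Sfam r)) (c v) ≠ 0 := by
      intro r
      by_contra h
      push_neg at h
      refine hinf0 (Sfam r) (hSinf r) (ContinuousLinearMap.ext fun v => ?_)
      rw [ContinuousLinearMap.comp_apply, h v, ContinuousLinearMap.zero_apply]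
    choose vv hvv using hvec
    set g : ℝ → H := fun r => σ (PS b (Sfam r)) (c (vv r)) with hg
    have hgorth : ∀ r s : ℝ, r ≠ s → ⟪g r, g s⟫ = 0 := by
      intro r s hrs
      have h1 : ⟪g r, g s⟫
          = ⟪c (vv r), ContinuousLinearMap.adjoint (σ (PS b (Sfam r)))
              (σ (PS b (Sfam s)) (c (vv s)))⟫ := by
        rw [ContinuousLinearMap.adjoint_inner_right]
      have h2 : ContinuousLinearMap.adjoint (σ (PS b (Sfam r))) = σ (PS b (Sfam r)) := by
        rw [← ContinuousLinearMap.star_eq_adjoint, ← map_star, (PS_selfAdjoint b (Sfam r))]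
      rw [h1, h2]
      have h3 : σ (PS b (Sfam r)) (σ (PS b (Sfam s)) (c (vv s)))
          = σ (PS b (Sfam r) * PS b (Sfam s)) (c (vv s)) := by
        rw [map_mul]; rfl
      rw [h3, ContinuousLinearMap.mul_def, PS_comp]
      have hfin : (Sfam r ∩ Sfam s).Finite := hSad r s hrs
      have h4 : Sfam r ∩ Sfam s = ↑hfin.toFinset := (Set.Finite.coe_toFinset hfin).symm
      rw [h4]
      have h5 := hfin0 hfin.toFinset
      have h6 : σ (PS b ↑hfin.toFinset) (c (vv s)) = 0 := by
        have := congrArg (fun T => T (vv s)) h5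
        simpa [ContinuousLinearMap.comp_apply] using this
      rw [h6, inner_zero_right]
    set wfam : ℝ → H := fun r => (‖g r‖ : ℂ)⁻¹ • g r with hwfam
    have hwon : Orthonormal ℂ wfam := by
      constructor
      · intro r
        have hgne : g r ≠ 0 := hvv r
        show ‖(‖g r‖ : ℂ)⁻¹ • g r‖ = 1
        rw [norm_smul, norm_inv]
        have hnc : ‖(‖g r‖ : ℂ)‖ = ‖g r‖ := by
          rw [Complex.norm_real, Real.norm_eq_abs, abs_norm]
        rw [hnc]
        exact inv_mul_cancel₀ (norm_ne_zero_iff.mpr hgne)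
      · intro r s hrs
        show ⟪(‖g r‖ : ℂ)⁻¹ • g r, (‖g s‖ : ℂ)⁻¹ • g s⟫ = 0
        rw [inner_smul_left, inner_smul_right, hgorth r s hrs, mul_zero, mul_zero]
    haveI := countable_of_orthonormal hwon
    exact Cardinal.not_countable_real Set.countable_univ
  -- conclusion: z = σ y for y := (V j0)† z (V j0)
  set y : H →L[ℂ] H := ContinuousLinearMap.adjoint (V j0) ∘L (z ∘L V j0) with hy
  have hej : ∀ j : J,
      (V j ∘L ContinuousLinearMap.adjoint (V j0)) ∈ Set.centralizer (Set.range ⇑σ) := by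
    intro j a ha
    obtain ⟨x, rfl⟩ := ha
    show σ x * (V j ∘L ContinuousLinearMap.adjoint (V j0))
        = (V j ∘L ContinuousLinearMap.adjoint (V j0)) * σ x
    rw [ContinuousLinearMap.mul_def, ContinuousLinearMap.mul_def]
    rw [← ContinuousLinearMap.comp_assoc, hIT x j, ContinuousLinearMap.comp_assoc,
      ← hITadj x j0]
    ext v
    simp only [ContinuousLinearMap.comp_apply]
  have hzej : ∀ j : J, (V j ∘L ContinuousLinearMap.adjoint (V j0)) * z
      = z * (V j ∘L ContinuousLinearMap.adjoint (V j0)) := fun j => hz _ (hej j)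
  have hzV : ∀ j : J, σ y ∘L V j = z ∘L V j := by
    intro j
    rw [hIT y j, hy]
    have h1 : V j ∘L (ContinuousLinearMap.adjoint (V j0) ∘L (z ∘L V j0))
        = ((V j ∘L ContinuousLinearMap.adjoint (V j0)) * z) ∘L V j0 := by
      rw [ContinuousLinearMap.mul_def]
      rw [ContinuousLinearMap.comp_assoc, ContinuousLinearMap.comp_assoc]
    rw [h1, hzej j, ContinuousLinearMap.mul_def]
    rw [ContinuousLinearMap.comp_assoc, ContinuousLinearMap.comp_assoc, hVadj j0]
    ext v
    simp only [ContinuousLinearMap.comp_apply, ContinuousLinearMap.one_apply]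
  have hfinal : σ y = z := by
    have hWle : W ≤ LinearMap.ker ((σ y - z : H →L[ℂ] H) : H →ₗ[ℂ] H) := by
      rw [hW]
      apply Submodule.topologicalClosure_minimal
      · rw [Submodule.span_le]
        rintro x hx
        rw [hWset, Set.mem_iUnion] at hx
        obtain ⟨j, v, rfl⟩ := hx
        rw [SetLike.mem_coe, LinearMap.mem_ker]
        show (σ y - z) (V j v) = 0
        rw [ContinuousLinearMap.sub_apply]
        have h2 := congrArg (fun T => T v) (hzV j)
        simp only [ContinuousLinearMap.comp_apply] at h2
        rw [h2, sub_self]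
      · exact ContinuousLinearMap.isClosed_ker _
    rw [hWtop] at hWle
    ext v
    have h3 : v ∈ LinearMap.ker ((σ y - z : H →L[ℂ] H) : H →ₗ[ℂ] H) := hWle trivial
    rw [LinearMap.mem_ker] at h3
    have h4 : σ y v - z v = 0 := by
      rw [← ContinuousLinearMap.sub_apply]
      exact h3
    exact sub_eq_zero.mp h4
  exact ⟨y, hfinal⟩


/-- Let `H` be an infinite-dimensional separable Hilbert space and
`M = B(H)` (a type I_∞ factor). Every Powers shift `ρ ∈ End(B(H))`, i.e. every unital
injective *-endomorphism with `⋂ n, ρ^n(B(H)) = ℂ·1`, has the generating property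
`M_ρ = B(H)`. -/
theorem generating_of_powers_shift [TopologicalSpace.SeparableSpace H]
    (hinf : ¬ FiniteDimensional ℂ H)
    (ρ : (H →L[ℂ] H) →⋆ₐ[ℂ] (H →L[ℂ] H)) (hρinj : Function.Injective ρ)
    (hshift : (⋂ n, (⇑ρ)^[n] '' (Set.univ : Set (H →L[ℂ] H))) =
      Set.range fun c : ℂ => c • (1 : H →L[ℂ] H)) :
    genVNUniv ⇑ρ = (Set.univ : Set (H →L[ℂ] H)) := by
  apply Set.eq_univ_of_forall
  intro x
  intro z hz
  have hz' : ∀ n : ℕ, z ∈ Set.centralizer (Set.centralizer ((⇑ρ)^[n] '' Set.univ)) := by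
    intro n y hy
    exact hz y (Set.mem_iUnion.2 ⟨n, hy⟩)
  have hz2 : z ∈ ⋂ n, (⇑ρ)^[n] '' (Set.univ : Set (H →L[ℂ] H)) := by
    rw [Set.mem_iInter]
    intro n
    have hco : ⇑(ρ ^ n) = (⇑ρ)^[n] := by
      induction n with
      | zero => simp [pow_zero]; rfl
      | succ k ih =>
        rw [pow_succ]
        funext a
        show (ρ ^ k) (ρ a) = (⇑ρ)^[k+1] a
        rw [ih, Function.iterate_succ_apply]
    have hiter : (⇑ρ)^[n] '' Set.univ = Set.range ((ρ ^ n : _ →⋆ₐ[ℂ] _)) := by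
      rw [hco, Set.image_univ]
    rw [hiter]
    have h2 := hz' n
    rw [hiter] at h2
    refine core hinf (ρ ^ n) ?_ h2
    rw [hco]
    exact Function.Injective.iterate hρinj n
  rw [hshift] at hz2
  obtain ⟨c, rfl⟩ := hz2
  simp [mul_smul_comm, smul_mul_assoc]
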